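/- For any x_i ∈ K_i (1 ≤ i ≤ N), the limit F_{x_1...x_N}(σ) := lim_{m→−∞} w_{σ_0}∘⋯∘w_{σ_m}(x_{i(σ_m)}) exists for P_{x_1...x_N}-almost every σ ∈ Σ; moreover, for P_{x_1...x_N}-a.e. σ, the sequence (Y^{x_1...x_N}_{m0}(σ))_{m≤0} is Cauchy with Σ_{m=0}^{-∞} d(Y_{m0}(σ), Y_{(m-1)0}(σ)) < ∞. -/

import Mathlib

open MeasureTheory ENNReal Filter

/-- A contractive Markov system on a metric space `K` with vertex type `V` and edge type `E`. -/
structure CMS (E V K : Type*) [Fintype E] [MetricSpace K] [MeasurableSpace K] where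
  i : E → V
  t : E → V
  Ks : V → Set K
  w : E → K → K
  p : E → K → ℝ
  a : ℝ
  ha0 : 0 < a
  ha1 : a < 1
  Ks_nonempty : ∀ v, (Ks v).Nonempty
  Ks_meas : ∀ v, MeasurableSet (Ks v)
  Ks_disj : ∀ v v', v ≠ v' → Disjoint (Ks v) (Ks v')
  Ks_cover : ∀ x : K, ∃ v, x ∈ Ks v
  w_meas : ∀ e, Measurable (w e)
  p_meas : ∀ e, Measurable (p e)
  p_nonneg : ∀ e x, 0 ≤ p e x
  p_sum : ∀ x : K, ∑ e, p e x = 1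
  p_zero : ∀ e, ∀ x ∉ Ks (i e), p e x = 0
  w_maps : ∀ e, Set.MapsTo (w e) (Ks (i e)) (Ks (t e))
  contractive : ∀ v, ∀ x ∈ Ks v, ∀ y ∈ Ks v,
      ∑ e, p e x * dist (w e x) (w e y) ≤ a * dist x y

variable {E V K : Type*} [Fintype E] [MetricSpace K] [MeasurableSpace K]

/-- `S.orbit e m x j = w_{e_{m+j}} ∘ ⋯ ∘ w_{e_m} (x)`. -/
def CMS.orbit (S : CMS E V K) (e : ℤ → E) (m : ℤ) (x : K) : ℕ → K
  | 0 => S.w (e m) x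
  | j + 1 => S.w (e (m + j + 1)) (S.orbit e m x j)

/-- `S.pathProb e m x j = p_{e_m}(x) p_{e_{m+1}}(w_{e_m}x) ⋯ p_{e_{m+j}}(w_{e_{m+j-1}}∘⋯∘w_{e_m}x)`. -/
def CMS.pathProb (S : CMS E V K) (e : ℤ → E) (m : ℤ) (x : K) : ℕ → ℝ
  | 0 => S.p (e m) x
  | j + 1 => S.pathProb e m x j * S.p (e (m + j + 1)) (S.orbit e m x j)

/-- The σ-algebra `𝒜_m` on `Σ = E^ℤ` generated by the coordinates with index `≥ m`. -/
def Am (E : Type*) (m : ℤ) : MeasurableSpace (ℤ → E) :=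
  ⨆ (i : ℤ) (_ : m ≤ i), MeasurableSpace.comap (fun σ => σ i) ⊤

/-- The cylinder `_m[e_m, …, e_{m+j}]`. -/
def cyl (m : ℤ) (j : ℕ) (e : ℤ → E) : Set (ℤ → E) :=
  {σ | ∀ k : ℤ, m ≤ k → k ≤ m + j → σ k = e k}

/-- `P` is the family of Markov measures `P^m_x` on `(Σ, 𝒜_m)` of the CMS `S`. -/
def IsKernel (S : CMS E V K) (P : ∀ m : ℤ, K → @Measure (ℤ → E) (Am E m)) : Prop :=
  (∀ (m : ℤ) (x : K), @IsProbabilityMeasure _ (Am E m) (P m x)) ∧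
  ∀ (m : ℤ) (x : K) (e : ℤ → E) (j : ℕ),
    P m x (cyl m j e) = ENNReal.ofReal (S.pathProb e m x j)

/-- The `m`-th lift `Φ_m(ν)(A) = ∫ P^m_x(A) dν(x)`. -/
noncomputable def liftMeas (P : ∀ m : ℤ, K → @Measure (ℤ → E) (Am E m))
    (m : ℤ) (ν : Measure K) (A : Set (ℤ → E)) : ℝ≥0∞ :=
  ∫⁻ x, P m x A ∂ν

/-- The lift outer measure `Φ(ν)`, via coverings `B ⊆ ⋃_{m ≤ 0} A_m`, `A_m ∈ 𝒜_m` (indexed by `m = -n`). -/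
noncomputable def PhiM (P : ∀ m : ℤ, K → @Measure (ℤ → E) (Am E m))
    (ν : Measure K) (B : Set (ℤ → E)) : ℝ≥0∞ :=
  ⨅ (A : ℕ → Set (ℤ → E)) (_ : ∀ n : ℕ, MeasurableSet[Am E (-(n : ℤ))] (A n))
    (_ : B ⊆ ⋃ n, A n), ∑' n : ℕ, liftMeas P (-(n : ℤ)) ν (A n)

/-- `Y^{x_1…x_N}_{m0}(σ) = w_{σ_0}∘⋯∘w_{σ_m}(x_{i(σ_m)})`. -/
noncomputable def CMS.Y (S : CMS E V K) (xs : V → K) (m : ℤ) (σ : ℤ → E) : K :=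
  S.orbit σ m (xs (S.i (σ m))) (-m).toNat

/-- The uniform measure `(1/N) ∑_i δ_{x_i}`. -/
noncomputable def unif [Fintype V] (xs : V → K) : Measure K :=
  ((Fintype.card V : ℝ≥0∞))⁻¹ • ∑ v : V, Measure.dirac (xs v)

/-- The measure `P^m_{x_1…x_N} = Φ_m((1/N)∑δ_{x_i}) = (1/N)∑_i P^m_{x_i}`. -/
noncomputable def PmMix [Fintype V] (P : ∀ m : ℤ, K → @Measure (ℤ → E) (Am E m))
    (xs : V → K) (m : ℤ) : @Measure (ℤ → E) (Am E m) :=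
  ((Fintype.card V : ℝ≥0∞))⁻¹ • ∑ v : V, P m (xs v)


section Aux5

variable {E V K : Type*} [Fintype E] [MetricSpace K] [MeasurableSpace K]

/-- Word-indexed orbit, cons-style recursion. -/
def worb (S : CMS E V K) : {j : ℕ} → (Fin (j+1) → E) → K → K
  | 0, u, x => S.w (u 0) x
  | _+1, u, x => worb S (Fin.tail u) (S.w (u 0) x)

/-- Word-indexed path probability, cons-style recursion. -/
def wprob (S : CMS E V K) : {j : ℕ} → (Fin (j+1) → E) → K → ℝ
  | 0, u, x => S.p (u 0) x
  | _+1, u, x => S.p (u 0) x * wprob S (Fin.tail u) (S.w (u 0) x)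

lemma wprob_nonneg (S : CMS E V K) : ∀ {j : ℕ} (u : Fin (j+1) → E) (x : K), 0 ≤ wprob S u x
  | 0, _, _ => S.p_nonneg _ _
  | _+1, _, _ => mul_nonneg (S.p_nonneg _ _) (wprob_nonneg S _ _)

lemma wprob_first_ne (S : CMS E V K) {j : ℕ} (u : Fin (j+1) → E) (x : K)
    (h : wprob S u x ≠ 0) : S.p (u 0) x ≠ 0 := by
  cases j with
  | zero => exact h
  | succ j => simp only [wprob] at h; exact left_ne_zero_of_mul h

lemma Ks_eq (S : CMS E V K) {x : K} {v v' : V} (h : x ∈ S.Ks v) (h' : x ∈ S.Ks v') : v = v' := by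
  by_contra hne
  exact Set.disjoint_left.mp (S.Ks_disj v v' hne) h h'

/-- The main contraction estimate for parallel word orbits. -/
lemma contractW (S : CMS E V K) :
    ∀ (j : ℕ) (v : V) (x y : K), x ∈ S.Ks v → y ∈ S.Ks v →
      ∑ u : Fin (j+1) → E, wprob S u x * dist (worb S u x) (worb S u y)
        ≤ S.a ^ (j+1) * dist x y := by
  intro j
  induction j with
  | zero =>
    intro v x y hx hy
    rw [← Equiv.sum_comp (Equiv.funUnique (Fin 1) E).symm
        (fun u : Fin 1 → E => wprob S u x * dist (worb S u x) (worb S u y))]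
    simp only [Equiv.funUnique_symm_apply, worb, wprob, pow_one]
    have : (∑ e : E, S.p (@uniqueElim (Fin 1) (fun _ => E) _ e 0) x *
        dist (S.w (@uniqueElim (Fin 1) (fun _ => E) _ e 0) x)
          (S.w (@uniqueElim (Fin 1) (fun _ => E) _ e 0) y))
        = ∑ e : E, S.p e x * dist (S.w e x) (S.w e y) := by
      refine Finset.sum_congr rfl fun e _ => ?_
      have h0 : (0 : Fin 1) = default := rfl
      rw [h0, uniqueElim_default]
    rw [this]
    simpa using S.contractive v x hx y hy
  | succ j IH =>
    intro v x y hx hy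
    rw [← Equiv.sum_comp (Fin.consEquiv (fun _ : Fin (j+2) => E))
        (fun u : Fin (j+2) → E => wprob S u x * dist (worb S u x) (worb S u y))]
    rw [Fintype.sum_prod_type]
    simp only [Fin.consEquiv_apply, worb, wprob, Fin.tail_cons, Fin.cons_zero]
    have key : ∀ e : E,
        (∑ u' : Fin (j+1) → E, S.p e x * wprob S u' (S.w e x) *
          dist (worb S u' (S.w e x)) (worb S u' (S.w e y)))
          ≤ S.p e x * (S.a ^ (j+1) * dist (S.w e x) (S.w e y)) := by
      intro e
      have : (∑ u' : Fin (j+1) → E, S.p e x * wprob S u' (S.w e x) *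
          dist (worb S u' (S.w e x)) (worb S u' (S.w e y)))
          = S.p e x * ∑ u' : Fin (j+1) → E, wprob S u' (S.w e x) *
            dist (worb S u' (S.w e x)) (worb S u' (S.w e y)) := by
        rw [Finset.mul_sum]; exact Finset.sum_congr rfl fun u' _ => by ring
      rw [this]
      by_cases hxe : x ∈ S.Ks (S.i e)
      · have hv : v = S.i e := Ks_eq S hx hxe
        have hye : y ∈ S.Ks (S.i e) := hv ▸ hy
        exact mul_le_mul_of_nonneg_left
          (IH (S.t e) (S.w e x) (S.w e y) (S.w_maps e hxe) (S.w_maps e hye))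
          (S.p_nonneg e x)
      · rw [S.p_zero e x hxe]; simp
    calc (∑ e : E, ∑ u' : Fin (j+1) → E, S.p e x * wprob S u' (S.w e x) *
          dist (worb S u' (S.w e x)) (worb S u' (S.w e y)))
        ≤ ∑ e : E, S.p e x * (S.a ^ (j+1) * dist (S.w e x) (S.w e y)) :=
          Finset.sum_le_sum fun e _ => key e
      _ = S.a ^ (j+1) * ∑ e : E, S.p e x * dist (S.w e x) (S.w e y) := by
          rw [Finset.mul_sum]; exact Finset.sum_congr rfl fun e _ => by ring
      _ ≤ S.a ^ (j+1) * (S.a * dist x y) :=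
          mul_le_mul_of_nonneg_left (S.contractive v x hx y hy)
            (pow_nonneg S.ha0.le _)
      _ = S.a ^ (j+2) * dist x y := by ring

/-- Contraction estimate where the first orbit starts at `xs (i (u 0))`. -/
lemma contractW' (S : CMS E V K) (xs : V → K) (hxs : ∀ v, xs v ∈ S.Ks v)
    (j : ℕ) (v : V) (y : K) (hy : y ∈ S.Ks v) :
    ∑ u : Fin (j+1) → E, wprob S u y * dist (worb S u (xs (S.i (u 0)))) (worb S u y)
      ≤ S.a ^ (j+1) * dist (xs v) y := by
  have h2 := contractW S j v y (xs v) hy (hxs v)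
  rw [dist_comm (xs v) y]
  refine le_trans (Finset.sum_le_sum (fun u _ => ?_)) h2
  by_cases h : wprob S u y = 0
  · rw [h]; simp
  · have hp := wprob_first_ne S u y h
    have hyK : y ∈ S.Ks (S.i (u 0)) := by
      by_contra hc; exact hp (S.p_zero _ _ hc)
    rw [Ks_eq S hyK hy, dist_comm (worb S u (xs v)) (worb S u y)]

/-- A uniform bound for one-step displacements of the anchor points. -/
noncomputable def Dsum (S : CMS E V K) (xs : V → K) : ℝ :=
  ∑ e : E, dist (xs (S.t e)) (S.w e (xs (S.i e)))

lemma Dsum_nonneg (S : CMS E V K) (xs : V → K) : 0 ≤ Dsum S xs :=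
  Finset.sum_nonneg fun _ _ => dist_nonneg

lemma dist_le_Dsum (S : CMS E V K) (xs : V → K) (e : E) :
    dist (xs (S.t e)) (S.w e (xs (S.i e))) ≤ Dsum S xs :=
  Finset.single_le_sum (f := fun e => dist (xs (S.t e)) (S.w e (xs (S.i e))))
    (fun _ _ => dist_nonneg) (Finset.mem_univ e)

/-- The value of `dist (Y_{-n}, Y_{-n-1})` on the cylinder of a word `u`. -/
noncomputable def valW (S : CMS E V K) (xs : V → K) (n : ℕ) (u : Fin (n+2) → E) : ℝ :=
  dist (worb S (Fin.tail u) (xs (S.i (Fin.tail u 0)))) (worb S u (xs (S.i (u 0))))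

/-- The main expectation estimate. -/
lemma mainEst (S : CMS E V K) (xs : V → K) (hxs : ∀ v, xs v ∈ S.Ks v) (n : ℕ) (v : V) :
    ∑ u : Fin (n+2) → E, wprob S u (xs v) * valW S xs n u
      ≤ S.a ^ (n+1) * Dsum S xs := by
  rw [← Equiv.sum_comp (Fin.consEquiv (fun _ : Fin (n+2) => E))
      (fun u : Fin (n+2) → E => wprob S u (xs v) * valW S xs n u)]
  rw [Fintype.sum_prod_type]
  simp only [Fin.consEquiv_apply, valW, worb, wprob, Fin.tail_cons, Fin.cons_zero]
  have key : ∀ e : E,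
      (∑ u' : Fin (n+1) → E, S.p e (xs v) * wprob S u' (S.w e (xs v)) *
        dist (worb S u' (xs (S.i (u' 0)))) (worb S u' (S.w e (xs (S.i e)))))
        ≤ S.p e (xs v) * (S.a ^ (n+1) * Dsum S xs) := by
    intro e
    by_cases hxe : xs v ∈ S.Ks (S.i e)
    · have hv : v = S.i e := Ks_eq S (hxs v) hxe
      have hxie : xs (S.i e) = xs v := by rw [← hv]
      have hmem : S.w e (xs v) ∈ S.Ks (S.t e) := S.w_maps e hxe
      have inner : (∑ u' : Fin (n+1) → E, wprob S u' (S.w e (xs v)) *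
          dist (worb S u' (xs (S.i (u' 0)))) (worb S u' (S.w e (xs v))))
          ≤ S.a ^ (n+1) * dist (xs (S.t e)) (S.w e (xs v)) :=
        contractW' S xs hxs n (S.t e) (S.w e (xs v)) hmem
      calc (∑ u' : Fin (n+1) → E, S.p e (xs v) * wprob S u' (S.w e (xs v)) *
            dist (worb S u' (xs (S.i (u' 0)))) (worb S u' (S.w e (xs (S.i e)))))
          = S.p e (xs v) * ∑ u' : Fin (n+1) → E, wprob S u' (S.w e (xs v)) *
              dist (worb S u' (xs (S.i (u' 0)))) (worb S u' (S.w e (xs v))) := by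
            rw [Finset.mul_sum]
            exact Finset.sum_congr rfl fun u' _ => by rw [hxie]; ring
        _ ≤ S.p e (xs v) * (S.a ^ (n+1) * dist (xs (S.t e)) (S.w e (xs v))) :=
            mul_le_mul_of_nonneg_left inner (S.p_nonneg _ _)
        _ ≤ S.p e (xs v) * (S.a ^ (n+1) * Dsum S xs) := by
            refine mul_le_mul_of_nonneg_left (mul_le_mul_of_nonneg_left ?_
              (pow_nonneg S.ha0.le _)) (S.p_nonneg _ _)
            rw [← hxie]
            exact dist_le_Dsum S xs e
    · rw [S.p_zero e _ hxe]; simp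
  calc (∑ e : E, ∑ u' : Fin (n+1) → E, S.p e (xs v) * wprob S u' (S.w e (xs v)) *
        dist (worb S u' (xs (S.i (u' 0)))) (worb S u' (S.w e (xs (S.i e)))))
      ≤ ∑ e : E, S.p e (xs v) * (S.a ^ (n+1) * Dsum S xs) :=
        Finset.sum_le_sum fun e _ => key e
    _ = (∑ e : E, S.p e (xs v)) * (S.a ^ (n+1) * Dsum S xs) := by rw [Finset.sum_mul]
    _ = S.a ^ (n+1) * Dsum S xs := by rw [S.p_sum]; ring

lemma orbit_succ (S : CMS E V K) (e : ℤ → E) :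
    ∀ (j : ℕ) (m : ℤ) (x : K), S.orbit e m x (j+1) = S.orbit e (m+1) (S.w (e m) x) j := by
  intro j
  induction j with
  | zero =>
    intro m x
    show S.w (e (m + (0:ℕ) + 1)) (S.orbit e m x 0) = _
    simp only [CMS.orbit]
    norm_num
  | succ j IH =>
    intro m x
    show S.w (e (m + ((j:ℤ)+1) + 1)) (S.orbit e m x (j+1)) = S.w (e (m+1+(j:ℤ)+1)) _
    rw [IH]
    have : m + ((j:ℤ)+1) + 1 = m+1+(j:ℤ)+1 := by ring
    rw [this]

lemma pathProb_succ (S : CMS E V K) (e : ℤ → E) :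
    ∀ (j : ℕ) (m : ℤ) (x : K),
      S.pathProb e m x (j+1) = S.p (e m) x * S.pathProb e (m+1) (S.w (e m) x) j := by
  intro j
  induction j with
  | zero =>
    intro m x
    show S.pathProb e m x 0 * S.p (e (m + (0:ℕ) + 1)) (S.orbit e m x 0) = _
    simp only [CMS.pathProb, CMS.orbit]
    norm_num
  | succ j IH =>
    intro m x
    show S.pathProb e m x (j+1) * S.p (e (m + ((j:ℤ)+1) + 1)) (S.orbit e m x (j+1)) = _
    rw [IH, orbit_succ]
    show _ = S.p (e m) x * (S.pathProb e (m+1) (S.w (e m) x) j *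
      S.p (e (m+1+(j:ℤ)+1)) (S.orbit e (m+1) (S.w (e m) x) j))
    have : m + ((j:ℤ)+1) + 1 = m+1+(j:ℤ)+1 := by ring
    rw [this]; ring

lemma orbit_eq_worb (S : CMS E V K) (e : ℤ → E) :
    ∀ (j : ℕ) (m : ℤ) (x : K),
      S.orbit e m x j = worb S (fun i : Fin (j+1) => e (m + (i : ℕ))) x := by
  intro j
  induction j with
  | zero =>
    intro m x
    simp [CMS.orbit, worb]
  | succ j IH =>
    intro m x
    rw [orbit_succ, IH]
    have h1 : (fun i : Fin (j+1) => e (m+1+(i:ℕ)))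
        = Fin.tail (fun i : Fin (j+2) => e (m + (i:ℕ))) := by
      funext i
      simp only [Fin.tail, Fin.val_succ]
      congr 1
      push_cast
      ring
    have h2 : e m = (fun i : Fin (j+2) => e (m + (i:ℕ))) 0 := by norm_num
    rw [h1, h2]
    rfl

lemma pathProb_eq_wprob (S : CMS E V K) (e : ℤ → E) :
    ∀ (j : ℕ) (m : ℤ) (x : K),
      S.pathProb e m x j = wprob S (fun i : Fin (j+1) => e (m + (i : ℕ))) x := by
  intro j
  induction j with
  | zero =>
    intro m x
    simp [CMS.pathProb, wprob]
  | succ j IH =>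
    intro m x
    rw [pathProb_succ, IH]
    have h1 : (fun i : Fin (j+1) => e (m+1+(i:ℕ)))
        = Fin.tail (fun i : Fin (j+2) => e (m + (i:ℕ))) := by
      funext i
      simp only [Fin.tail, Fin.val_succ]
      congr 1
      push_cast
      ring
    have h2 : e m = (fun i : Fin (j+2) => e (m + (i:ℕ))) 0 := by norm_num
    rw [h1, h2]
    rfl

lemma orbit_congr (S : CMS E V K) :
    ∀ (j : ℕ) (m : ℤ) (x : K) (e e' : ℤ → E),
      (∀ k, m ≤ k → k ≤ m + j → e k = e' k) → S.orbit e m x j = S.orbit e' m x j := by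
  intro j
  induction j with
  | zero =>
    intro m x e e' h
    simp only [CMS.orbit]
    rw [h m le_rfl (by simp)]
  | succ j IH =>
    intro m x e e' h
    show S.w (e (m + (j:ℤ) + 1)) _ = S.w (e' (m + (j:ℤ) + 1)) _
    rw [h (m + (j:ℤ) + 1) (by omega) (by push_cast; omega),
      IH m x e e' (fun k hk1 hk2 => h k hk1 (by push_cast at hk2 ⊢; omega))]

/-- Extension of a finite word to a biinfinite sequence. -/
def extW {E : Type*} (m : ℤ) {j : ℕ} (u : Fin (j+1) → E) : ℤ → E := fun k =>
  if h : 0 ≤ k - m ∧ k - m < (j+1 : ℤ) then u ⟨(k - m).toNat, by omega⟩ else u 0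

lemma extW_apply {E : Type*} (m : ℤ) {j : ℕ} (u : Fin (j+1) → E) (k : ℤ)
    (h1 : m ≤ k) (h2 : k ≤ m + j) :
    extW m u k = u ⟨(k - m).toNat, by omega⟩ := dif_pos ⟨by omega, by omega⟩

lemma extW_word {E : Type*} (m : ℤ) {j : ℕ} (u : Fin (j+1) → E) (i : Fin (j+1)) :
    extW m u (m + (i : ℕ)) = u i := by
  rw [extW_apply m u _ (by omega) (by have := i.isLt; omega)]
  congr 1
  apply Fin.ext
  simp
  all_goals omega

lemma mem_cyl_extW {E : Type*} (m : ℤ) (j : ℕ) (σ : ℤ → E) :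
    σ ∈ cyl m j (extW m (fun i : Fin (j+1) => σ (m + (i : ℕ)))) := by
  intro k h1 h2
  rw [extW_apply m _ k h1 h2]
  show σ k = σ (m + (((k - m).toNat : ℕ) : ℤ))
  congr 1
  omega

lemma cyl_measurable (m : ℤ) (j : ℕ) (e : ℤ → E) :
    MeasurableSet[Am E m] (cyl m j e) := by
  have heq : cyl m j e = ⋂ (k : ℤ), ⋂ (_ : m ≤ k), ⋂ (_ : k ≤ m + j),
      (fun σ : ℤ → E => σ k) ⁻¹' {e k} := by
    ext σ
    simp [cyl]
  rw [heq]
  refine MeasurableSet.iInter fun k => MeasurableSet.iInter fun hk =>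
    MeasurableSet.iInter fun hk2 => ?_
  have hle : MeasurableSpace.comap (fun σ : ℤ → E => σ k) ⊤ ≤ Am E m :=
    le_iSup₂ (f := fun (i : ℤ) (_ : m ≤ i) =>
      MeasurableSpace.comap (fun σ : ℤ → E => σ i) ⊤) k hk
  exact hle _ ⟨{e k}, trivial, rfl⟩

/-- The set of words whose cylinder value exceeds `t`. -/
noncomputable def badF (S : CMS E V K) (xs : V → K) (t : ℝ) (n : ℕ) :
    Finset (Fin (n+2) → E) :=
  @Finset.filter _ (fun u => t < valW S xs n u) (Classical.decPred _) Finset.univ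

lemma mem_badF (S : CMS E V K) (xs : V → K) (t : ℝ) (n : ℕ) (u : Fin (n+2) → E) :
    u ∈ badF S xs t n ↔ t < valW S xs n u := by
  simp [badF, Finset.mem_filter]

/-- The exceptional set at level `n`. -/
noncomputable def badSet (S : CMS E V K) (xs : V → K) (t : ℝ) (n : ℕ) : Set (ℤ → E) :=
  ⋃ u ∈ badF S xs t n, cyl (-(n:ℤ)-1) (n+1) (extW (-(n:ℤ)-1) u)

lemma badSet_measurable (S : CMS E V K) (xs : V → K) (t : ℝ) (n : ℕ) :
    MeasurableSet[Am E (-(n:ℤ)-1)] (badSet S xs t n) :=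
  Finset.measurableSet_biUnion _ fun u _ => cyl_measurable _ _ _


lemma Y_on_cyl (S : CMS E V K) (xs : V → K) (n : ℕ) (u : Fin (n+2) → E) (σ : ℤ → E)
    (hσ : σ ∈ cyl (-(n:ℤ)-1) (n+1) (extW (-(n:ℤ)-1) u)) :
    dist (S.Y xs (-(n:ℤ)) σ) (S.Y xs (-(n:ℤ)-1) σ) = valW S xs n u := by
  set m : ℤ := -(n:ℤ)-1 with hmdef
  have hagree : ∀ k, m ≤ k → k ≤ m + ((n+1:ℕ):ℤ) → σ k = extW m u k := hσ
  have hσm : σ m = u 0 := by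
    rw [hagree m le_rfl (by push_cast; omega), extW_apply m u m le_rfl (by push_cast; omega)]
    congr 1
    apply Fin.ext
    simp
  have hσn : σ (-(n:ℤ)) = Fin.tail u 0 := by
    rw [hagree (-(n:ℤ)) (by omega) (by push_cast; omega),
      extW_apply m u _ (by omega) (by push_cast; omega)]
    show u _ = u (Fin.succ 0)
    congr 1
    apply Fin.ext
    simp
    omega
  have hY2 : S.Y xs (-(n:ℤ)-1) σ = worb S u (xs (S.i (u 0))) := by
    simp only [CMS.Y]
    have hm : (-(-(n:ℤ)-1)).toNat = n+1 := by omega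
    rw [← hmdef, hm, hσm]
    rw [orbit_congr S (n+1) m (xs (S.i (u 0))) σ (extW m u)
      (fun k h1 h2 => hagree k h1 (by push_cast at h2 ⊢; omega))]
    rw [orbit_eq_worb]
    have hw : (fun i : Fin (n+1+1) => extW m u (m + ((i:ℕ):ℤ))) = u :=
      funext fun i => extW_word m u i
    rw [hw]
  have hY1 : S.Y xs (-(n:ℤ)) σ = worb S (Fin.tail u) (xs (S.i (Fin.tail u 0))) := by
    simp only [CMS.Y]
    have hm : (-(-(n:ℤ))).toNat = n := by omega
    rw [hm, hσn]
    rw [orbit_congr S n (-(n:ℤ)) (xs (S.i (Fin.tail u 0))) σ (extW m u)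
      (fun k h1 h2 => hagree k (by omega) (by push_cast at h2 ⊢; omega))]
    rw [orbit_eq_worb]
    have hw : (fun i : Fin (n+1) => extW m u ((-(n:ℤ)) + ((i:ℕ):ℤ))) = Fin.tail u := by
      funext i
      rw [extW_apply m u _ (by omega) (by push_cast; have := i.isLt; omega)]
      show u _ = u i.succ
      congr 1
      apply Fin.ext
      simp [Fin.val_succ]
      omega
    rw [hw]
  rw [hY1, hY2, valW]

lemma notin_badSet (S : CMS E V K) (xs : V → K) (t : ℝ) (n : ℕ) (σ : ℤ → E)
    (h : σ ∉ badSet S xs t n) :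
    dist (S.Y xs (-(n:ℤ)) σ) (S.Y xs (-(n:ℤ)-1) σ) ≤ t := by
  by_contra hc
  push_neg at hc
  set u : Fin (n+2) → E := fun i => σ ((-(n:ℤ)-1) + ((i:ℕ):ℤ)) with hu
  have hmem : σ ∈ cyl (-(n:ℤ)-1) (n+1) (extW (-(n:ℤ)-1) u) := mem_cyl_extW _ _ σ
  have hval := Y_on_cyl S xs n u σ hmem
  refine h (Set.mem_biUnion ?_ hmem)
  exact (mem_badF S xs t n u).mpr (hval ▸ hc)

lemma badSet_bound (S : CMS E V K) (xs : V → K) (hxs : ∀ v, xs v ∈ S.Ks v)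
    (P : ∀ m : ℤ, K → @Measure (ℤ → E) (Am E m)) (hP : IsKernel S P)
    (n : ℕ) (t : ℝ) (ht : 0 < t) (v : V) :
    P (-(n:ℤ)-1) (xs v) (badSet S xs t n)
      ≤ ENNReal.ofReal (t⁻¹ * (S.a^(n+1) * Dsum S xs)) := by
  set m : ℤ := -(n:ℤ)-1 with hmdef
  have h2 : ∀ u : Fin (n+2) → E,
      P m (xs v) (cyl m (n+1) (extW m u)) = ENNReal.ofReal (wprob S u (xs v)) := by
    intro u
    rw [hP.2 m (xs v) (extW m u) (n+1), pathProb_eq_wprob]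
    have hw : (fun i : Fin (n+1+1) => extW m u (m + ((i:ℕ):ℤ))) = u :=
      funext fun i => extW_word m u i
    rw [hw]
  calc P m (xs v) (badSet S xs t n)
      ≤ ∑ u ∈ badF S xs t n, P m (xs v) (cyl m (n+1) (extW m u)) :=
        measure_biUnion_finset_le _ _
    _ = ∑ u ∈ badF S xs t n, ENNReal.ofReal (wprob S u (xs v)) :=
        Finset.sum_congr rfl fun u _ => h2 u
    _ = ENNReal.ofReal (∑ u ∈ badF S xs t n, wprob S u (xs v)) :=
        (ENNReal.ofReal_sum_of_nonneg fun u _ => wprob_nonneg S u _).symm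
    _ ≤ ENNReal.ofReal (t⁻¹ * (S.a^(n+1) * Dsum S xs)) := by
        refine ENNReal.ofReal_le_ofReal ?_
        have step1 : ∑ u ∈ badF S xs t n, wprob S u (xs v)
            ≤ ∑ u ∈ badF S xs t n, t⁻¹ * (wprob S u (xs v) * valW S xs n u) := by
          refine Finset.sum_le_sum fun u hu => ?_
          have hval : t < valW S xs n u := (mem_badF S xs t n u).mp hu
          have h1 : (1:ℝ) ≤ t⁻¹ * valW S xs n u := by
            rw [← inv_mul_cancel₀ ht.ne']
            exact mul_le_mul_of_nonneg_left hval.le (inv_nonneg.mpr ht.le)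
          calc wprob S u (xs v) = wprob S u (xs v) * 1 := (mul_one _).symm
            _ ≤ wprob S u (xs v) * (t⁻¹ * valW S xs n u) :=
                mul_le_mul_of_nonneg_left h1 (wprob_nonneg S u _)
            _ = t⁻¹ * (wprob S u (xs v) * valW S xs n u) := by ring
        refine step1.trans ?_
        rw [← Finset.mul_sum]
        refine mul_le_mul_of_nonneg_left ?_ (inv_nonneg.mpr ht.le)
        refine le_trans (Finset.sum_le_sum_of_subset_of_nonneg (Finset.subset_univ _)
          (fun u _ _ => mul_nonneg (wprob_nonneg S u _) dist_nonneg)) ?_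
        exact mainEst S xs hxs n v

lemma liftMeas_bound [Fintype V] [OpensMeasurableSpace K]
    (P : ∀ m : ℤ, K → @Measure (ℤ → E) (Am E m)) (xs : V → K)
    (m : ℤ) (c : ℝ≥0∞) (A : Set (ℤ → E)) (hbound : ∀ v : V, P m (xs v) A ≤ c) :
    liftMeas P m (unif xs) A ≤ c := by
  have hnull : unif xs (Set.range xs)ᶜ = 0 := by
    have hrange : MeasurableSet (Set.range xs) :=
      (Set.finite_range xs).isClosed.measurableSet
    simp only [unif, Measure.smul_apply, smul_eq_mul]
    have hs : (∑ v : V, Measure.dirac (xs v)) (Set.range xs)ᶜ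
        = ∑ v : V, Measure.dirac (xs v) (Set.range xs)ᶜ := by
      rw [Measure.coe_finset_sum, Finset.sum_apply]
    rw [hs]
    have hz : ∀ v : V, Measure.dirac (xs v) (Set.range xs)ᶜ = 0 := by
      intro v
      rw [Measure.dirac_apply' _ hrange.compl]
      simp [Set.indicator_of_notMem, Set.mem_range_self]
    simp [hz]
  have hae : ∀ᵐ x ∂(unif xs), P m x A ≤ c := by
    rw [ae_iff]
    refine measure_mono_null (fun x hx => ?_) hnull
    intro hxr
    obtain ⟨v, rfl⟩ := hxr
    exact hx (hbound v)
  have hUniv : unif xs Set.univ ≤ 1 := by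
    simp only [unif, Measure.smul_apply, smul_eq_mul]
    have hs : (∑ v : V, Measure.dirac (xs v)) Set.univ
        = ∑ v : V, Measure.dirac (xs v) Set.univ := by
      rw [Measure.coe_finset_sum, Finset.sum_apply]
    rw [hs]
    simp only [measure_univ, Finset.sum_const, Finset.card_univ, nsmul_eq_mul, mul_one]
    rcases eq_or_ne (Fintype.card V) 0 with h0 | h0
    · simp [h0]
    · rw [ENNReal.inv_mul_cancel (by exact_mod_cast h0) (by simp)]
  calc liftMeas P m (unif xs) A = ∫⁻ x, P m x A ∂(unif xs) := rfl
    _ ≤ ∫⁻ _, c ∂(unif xs) := lintegral_mono_ae hae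
    _ = c * (unif xs) Set.univ := lintegral_const c
    _ ≤ c * 1 := mul_le_mul_right hUniv c
    _ = c := mul_one c

lemma realGeo {a b : ℝ} (Dv : ℝ) (ha0 : 0 < a) (hab : a < b) (hD : 0 ≤ Dv) (n : ℕ) :
    ((Dv+1) * b^n)⁻¹ * (a^(n+1) * Dv) ≤ a * (a/b)^n := by
  have hb0 : 0 < b := lt_trans ha0 hab
  have hbn : 0 < b^n := pow_pos hb0 n
  have hD1 : (0:ℝ) < Dv + 1 := by linarith
  rw [div_pow, mul_inv, div_eq_mul_inv, pow_succ]
  have key : (Dv+1)⁻¹ * (b^n)⁻¹ * ((a^n * a) * Dv)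
      = (a * (a^n * (b^n)⁻¹)) * (Dv * (Dv+1)⁻¹) := by ring
  rw [key]
  have hq : Dv * (Dv+1)⁻¹ ≤ 1 := by
    rw [← div_eq_mul_inv, div_le_one hD1]
    linarith
  have hX : 0 ≤ a * (a^n * (b^n)⁻¹) := by positivity
  calc (a * (a^n * (b^n)⁻¹)) * (Dv * (Dv+1)⁻¹) ≤ (a * (a^n * (b^n)⁻¹)) * 1 :=
        mul_le_mul_of_nonneg_left hq hX
    _ = a * (a^n * (b^n)⁻¹) := mul_one _

lemma tsumGeoTail (c r : ℝ≥0∞) (M : ℕ) :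
    (∑' k : ℕ, if M + 1 ≤ k then c * r^(k-1) else 0) = c * ((1-r)⁻¹ * r^M) := by
  have hinj : Function.Injective (fun j : ℕ => j + (M+1)) := add_left_injective (M+1)
  rw [← Function.Injective.tsum_eq hinj
    (f := fun k : ℕ => if M + 1 ≤ k then c * r^(k-1) else 0) ?_]
  · have hcongr : ∀ j : ℕ,
        (if M + 1 ≤ j + (M+1) then c * r^(j+(M+1)-1) else 0) = c * (r^j * r^M) := by
      intro j
      rw [if_pos (by omega)]
      rw [← pow_add]
      congr 2
    rw [tsum_congr hcongr, ENNReal.tsum_mul_left, ENNReal.tsum_mul_right,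
      ENNReal.tsum_geometric]
  · intro k hk
    simp only [Function.mem_support, ne_eq, ite_eq_right_iff, not_forall] at hk
    obtain ⟨hk1, _⟩ := hk
    refine ⟨k - (M+1), ?_⟩
    show k - (M+1) + (M+1) = k
    omega

end Aux5

set_option maxHeartbeats 2000000
/-- for `P_{x_1…x_N}`-a.e. `σ` the limit `F_{x_1…x_N}(σ) = lim_{m→-∞} Y_{m0}(σ)`
exists; moreover a.e. the sequence is Cauchy and `∑_{m≤0} d(Y_{m0}, Y_{(m-1)0}) < ∞`. -/
theorem statement5 {E V K : Type*} [Fintype E] [Fintype V] [MetricSpace K] [CompleteSpace K]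
    [MeasurableSpace K] [BorelSpace K] (S : CMS E V K)
    (P : ∀ m : ℤ, K → @Measure (ℤ → E) (Am E m)) (hP : IsKernel S P)
    (xs : V → K) (hxs : ∀ v, xs v ∈ S.Ks v) :
    PhiM P (unif xs) {σ : ℤ → E |
      ¬ ((∃ L : K, Tendsto (fun n : ℕ => S.Y xs (-(n : ℤ)) σ) atTop (nhds L)) ∧
        CauchySeq (fun n : ℕ => S.Y xs (-(n : ℤ)) σ) ∧
        Summable (fun n : ℕ => dist (S.Y xs (-(n : ℤ)) σ) (S.Y xs (-(n : ℤ) - 1) σ)))} = 0 := by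
  classical
  set b : ℝ := (1 + S.a)/2 with hbdef
  have hb0 : 0 < b := by rw [hbdef]; linarith [S.ha0]
  have hab : S.a < b := by rw [hbdef]; linarith [S.ha1]
  have hb1 : b < 1 := by rw [hbdef]; linarith [S.ha1]
  have hD0 : 0 ≤ Dsum S xs := Dsum_nonneg S xs
  set r : ℝ≥0∞ := ENNReal.ofReal (S.a / b) with hrdef
  have hr1 : r < 1 := by
    rw [hrdef]
    exact ENNReal.ofReal_lt_one.mpr ((div_lt_one hb0).mpr hab)
  have hr_top : (1 - r)⁻¹ ≠ ⊤ := by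
    rw [Ne, ENNReal.inv_eq_top]
    intro h0
    exact hr1.not_ge (tsub_eq_zero_iff_le.mp h0)
  have key : ∀ M : ℕ, PhiM P (unif xs) {σ : ℤ → E |
      ¬ ((∃ L : K, Tendsto (fun n : ℕ => S.Y xs (-(n : ℤ)) σ) atTop (nhds L)) ∧
        CauchySeq (fun n : ℕ => S.Y xs (-(n : ℤ)) σ) ∧
        Summable (fun n : ℕ => dist (S.Y xs (-(n : ℤ)) σ) (S.Y xs (-(n : ℤ) - 1) σ)))}
      ≤ ENNReal.ofReal S.a * ((1-r)⁻¹ * r^M) := by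
    intro M
    set A : ℕ → Set (ℤ → E) :=
      fun k => if M + 1 ≤ k then badSet S xs ((Dsum S xs + 1) * b^(k-1)) (k-1) else ∅ with hA
    have hmeas : ∀ k : ℕ, MeasurableSet[Am E (-(k:ℤ))] (A k) := by
      intro k
      simp only [hA]
      by_cases hk : M + 1 ≤ k
      · rw [if_pos hk]
        have hcast : (-((k-1:ℕ):ℤ)-1) = -(k:ℤ) := by omega
        exact hcast ▸ badSet_measurable S xs _ (k-1)
      · rw [if_neg hk]
        exact @MeasurableSet.empty _ (Am E _)
    have hcover : {σ : ℤ → E |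
        ¬ ((∃ L : K, Tendsto (fun n : ℕ => S.Y xs (-(n : ℤ)) σ) atTop (nhds L)) ∧
          CauchySeq (fun n : ℕ => S.Y xs (-(n : ℤ)) σ) ∧
          Summable (fun n : ℕ => dist (S.Y xs (-(n : ℤ)) σ) (S.Y xs (-(n : ℤ) - 1) σ)))}
        ⊆ ⋃ k, A k := by
      intro σ hσ
      by_contra hnot
      rw [Set.mem_iUnion] at hnot
      push_neg at hnot
      have hd : ∀ n : ℕ, M ≤ n →
          dist (S.Y xs (-(n:ℤ)) σ) (S.Y xs (-(n:ℤ)-1) σ) ≤ (Dsum S xs + 1) * b^n := by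
        intro n hn
        have h3 := hnot (n+1)
        simp only [hA] at h3
        rw [if_pos (show M + 1 ≤ n + 1 by omega)] at h3
        have h4 : σ ∉ badSet S xs ((Dsum S xs + 1) * b^n) n := by simpa using h3
        exact notin_badSet S xs _ n σ h4
      have hsum : Summable
          (fun n : ℕ => dist (S.Y xs (-(n:ℤ)) σ) (S.Y xs (-(n:ℤ)-1) σ)) := by
        rw [← summable_nat_add_iff M]
        have hbd : ∀ n : ℕ,
            dist (S.Y xs (-((n+M:ℕ):ℤ)) σ) (S.Y xs (-((n+M:ℕ):ℤ)-1) σ)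
              ≤ ((Dsum S xs + 1) * b^M) * b^n := by
          intro n
          calc dist (S.Y xs (-((n+M:ℕ):ℤ)) σ) (S.Y xs (-((n+M:ℕ):ℤ)-1) σ)
              ≤ (Dsum S xs + 1) * b^(n+M) := hd (n+M) (by omega)
            _ = ((Dsum S xs + 1) * b^M) * b^n := by rw [pow_add]; ring
        refine Summable.of_nonneg_of_le (fun _ => dist_nonneg) hbd ?_
        exact (summable_geometric_of_lt_one hb0.le hb1).mul_left _
      have hcast : ∀ n : ℕ, (-((n:ℤ))-1) = -(((n+1:ℕ)):ℤ) := by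
        intro n; push_cast; ring
      have hcauchy : CauchySeq (fun n : ℕ => S.Y xs (-(n:ℤ)) σ) := by
        refine cauchySeq_of_summable_dist (hsum.congr fun n => ?_)
        rw [hcast n]
      have hlim : ∃ L, Tendsto (fun n : ℕ => S.Y xs (-(n:ℤ)) σ) atTop (nhds L) :=
        cauchySeq_tendsto_of_complete hcauchy
      exact hσ ⟨hlim, hcauchy, hsum⟩
    have hterm : ∀ k : ℕ, liftMeas P (-(k:ℤ)) (unif xs) (A k)
        ≤ (if M + 1 ≤ k then ENNReal.ofReal S.a * r^(k-1) else 0) := by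
      intro k
      by_cases hk : M + 1 ≤ k
      · simp only [hA]
        rw [if_pos hk, if_pos hk]
        have hcast : (-(k:ℤ)) = (-((k-1:ℕ):ℤ)-1) := by omega
        rw [hcast]
        set n : ℕ := k - 1 with hn
        have ht : 0 < (Dsum S xs + 1) * b^n := mul_pos (by linarith) (pow_pos hb0 n)
        refine le_trans (liftMeas_bound P xs _
          (ENNReal.ofReal (((Dsum S xs + 1) * b^n)⁻¹ * (S.a^(n+1) * Dsum S xs))) _
          (fun v => badSet_bound S xs hxs P hP n _ ht v)) ?_
        calc ENNReal.ofReal (((Dsum S xs + 1) * b^n)⁻¹ * (S.a^(n+1) * Dsum S xs))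
            ≤ ENNReal.ofReal (S.a * (S.a/b)^n) :=
              ENNReal.ofReal_le_ofReal (realGeo (Dsum S xs) S.ha0 hab hD0 n)
          _ = ENNReal.ofReal S.a * r^n := by
              rw [ENNReal.ofReal_mul S.ha0.le,
                ENNReal.ofReal_pow (div_nonneg S.ha0.le hb0.le), hrdef]
      · simp only [hA]
        rw [if_neg hk, if_neg hk]
        simp [liftMeas]
    have hle : PhiM P (unif xs) {σ : ℤ → E |
        ¬ ((∃ L : K, Tendsto (fun n : ℕ => S.Y xs (-(n : ℤ)) σ) atTop (nhds L)) ∧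
          CauchySeq (fun n : ℕ => S.Y xs (-(n : ℤ)) σ) ∧
          Summable (fun n : ℕ => dist (S.Y xs (-(n : ℤ)) σ) (S.Y xs (-(n : ℤ) - 1) σ)))}
        ≤ ∑' k : ℕ, liftMeas P (-(k:ℤ)) (unif xs) (A k) := by
      simp only [PhiM]
      exact iInf_le_of_le A (iInf_le_of_le hmeas (iInf_le_of_le hcover le_rfl))
    refine hle.trans (le_trans (ENNReal.tsum_le_tsum hterm) ?_)
    rw [tsumGeoTail]
  have htend : Tendsto (fun M : ℕ => ENNReal.ofReal S.a * ((1-r)⁻¹ * r^M)) atTop (nhds 0) := by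
    have h1 : Tendsto (fun M : ℕ => r^M) atTop (nhds 0) :=
      ENNReal.tendsto_pow_atTop_nhds_zero_of_lt_one hr1
    have h2 := ENNReal.Tendsto.const_mul (a := ENNReal.ofReal S.a * (1-r)⁻¹) h1
      (Or.inr (ENNReal.mul_ne_top ENNReal.ofReal_ne_top hr_top))
    simpa [mul_assoc] using h2
  exact le_antisymm (ge_of_tendsto' htend key) (zero_le)
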